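/- Let x ∈ ℝ, l ∈ ℝ, and for each y ≥ x let τ_y be a nonnegative (possibly infinite) random variable on a probability space (Ω, P_x), with |y| P_x(τ_y ≤ t) ≤ C for a constant C and all y, t. Then: lim_{y→∞} y P_x(τ_y ≤ t) = 0 for all t > 0 if and only if lim_{y→∞} y E_x[e^{−ατ_y}] = 0 for all α > 0. -/

import Mathlib

open Filter Set MeasureTheory
open scoped ENNReal

namespace Stmt9Aux

variable {Ω : Type*} [MeasurableSpace Ω] (μ : Measure Ω) [IsProbabilityMeasure μ]

noncomputable def expf (τ : Ω → ℝ≥0∞) (α : ℝ) (ω : Ω) : ℝ :=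
  if τ ω = ∞ then 0 else Real.exp (-α * (τ ω).toReal)

lemma expf_nonneg (τ : Ω → ℝ≥0∞) (α : ℝ) (ω : Ω) : 0 ≤ expf τ α ω := by
  unfold expf; split
  · exact le_rfl
  · positivity

lemma expf_le_one (τ : Ω → ℝ≥0∞) {α : ℝ} (hα : 0 ≤ α) (ω : Ω) : expf τ α ω ≤ 1 := by
  unfold expf; split
  · norm_num
  · calc Real.exp (-α * (τ ω).toReal) ≤ Real.exp 0 := by
          apply Real.exp_le_exp.2
          have : 0 ≤ (τ ω).toReal := ENNReal.toReal_nonneg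
          nlinarith
      _ = 1 := Real.exp_zero

lemma expf_measurable (τ : Ω → ℝ≥0∞) (hτ : Measurable τ) (α : ℝ) :
    Measurable (expf τ α) := by
  unfold expf
  have hset : MeasurableSet {ω | τ ω = ∞} := hτ (measurableSet_singleton ∞)
  exact Measurable.ite hset measurable_const
    (Real.measurable_exp.comp (measurable_const.mul hτ.ennreal_toReal))

lemma expf_integrable (τ : Ω → ℝ≥0∞) (hτ : Measurable τ) {α : ℝ} (hα : 0 ≤ α) :
    Integrable (expf τ α) μ :=
  (integrable_const 1).mono' ((expf_measurable τ hτ α).aestronglyMeasurable)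
    (Filter.Eventually.of_forall fun ω => by
      rw [Real.norm_eq_abs, abs_of_nonneg (expf_nonneg τ α ω)]
      exact expf_le_one τ hα ω)

/-- Markov-type inequality: `P(τ ≤ t) ≤ e^{αt} E[e^{-ατ}]`. -/
lemma markov (τ : Ω → ℝ≥0∞) (hτ : Measurable τ) {α t : ℝ} (hα : 0 < α) (ht : 0 < t) :
    (μ {ω | τ ω ≤ ENNReal.ofReal t}).toReal
      ≤ Real.exp (α * t) * ∫ ω, expf τ α ω ∂μ := by
  set B : Set Ω := {ω | τ ω ≤ ENNReal.ofReal t} with hBdef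
  have hB : MeasurableSet B := measurableSet_le hτ measurable_const
  have key : ∫ ω, Set.indicator B (fun _ => Real.exp (-(α * t))) ω ∂μ
      ≤ ∫ ω, expf τ α ω ∂μ := by
    apply integral_mono ((integrable_const _).indicator hB)
      (expf_integrable μ τ hτ hα.le)
    intro ω
    by_cases hω : ω ∈ B
    · rw [Set.indicator_of_mem hω]
      have hfin : τ ω ≠ ∞ := ne_top_of_le_ne_top ENNReal.ofReal_ne_top hω
      have hle : (τ ω).toReal ≤ t := ENNReal.toReal_le_of_le_ofReal ht.le hω
      simp only [expf, if_neg hfin]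
      apply Real.exp_le_exp.2
      nlinarith
    · rw [Set.indicator_of_notMem hω]; exact expf_nonneg τ α ω
  rw [integral_indicator_const _ hB, smul_eq_mul, measureReal_def] at key
  have h1 : Real.exp (α * t) * Real.exp (-(α * t)) = 1 := by
    rw [← Real.exp_add]; simp
  nlinarith [mul_le_mul_of_nonneg_left key (Real.exp_pos (α * t)).le,
    ENNReal.toReal_nonneg (a := μ B)]

lemma integral_exp_Ioi {α : ℝ} (hα : 0 < α) (s : ℝ) :
    ∫ u in Ioi s, α * Real.exp (-α * u) = Real.exp (-α * s) := by
  have hderiv : ∀ u ∈ Ici s, HasDerivAt (fun v => -Real.exp (-α * v))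
      (α * Real.exp (-α * u)) u := by
    intro u _
    have h1 : HasDerivAt (fun v : ℝ => -α * v) (-α) u := by
      simpa using (hasDerivAt_id u).const_mul (-α)
    have h2 := h1.exp
    have h3 : HasDerivAt (fun v => -Real.exp (-α * v)) _ u := h2.neg
    convert h3 using 1
    ring
  have htends : Tendsto (fun v => -Real.exp (-α * v)) atTop (nhds 0) := by
    have : Tendsto (fun v : ℝ => Real.exp (-α * v)) atTop (nhds 0) :=
      Real.tendsto_exp_atBot.comp
        (tendsto_id.const_mul_atTop_of_neg (neg_neg_iff_pos.2 hα))
    simpa using this.neg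
  have := integral_Ioi_of_hasDerivAt_of_tendsto' hderiv
    ((exp_neg_integrableOn_Ioi s hα).const_mul α) htends
  rw [this]; ring

/-- Key identity: `E[e^{-ατ}] = ∫_{t>0} P(τ ≤ t) · α e^{-αt} dt`. -/
lemma identity (τ : Ω → ℝ≥0∞) (hτ : Measurable τ) {α : ℝ} (hα : 0 < α) :
    ∫ ω, expf τ α ω ∂μ
      = ∫ t in Ioi (0:ℝ),
          (μ {ω | τ ω ≤ ENNReal.ofReal t}).toReal * (α * Real.exp (-α * t)) := by
  set ν : Measure ℝ := volume.restrict (Ioi (0:ℝ)) with hν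
  set f : Ω → ℝ → ℝ := fun ω t =>
    Set.indicator {u : ℝ | τ ω ≤ ENNReal.ofReal u} (fun u => α * Real.exp (-α * u)) t
    with hf
  set S : Set (Ω × ℝ) := {p | τ p.1 ≤ ENNReal.ofReal p.2} with hSdef
  have hS : MeasurableSet S :=
    measurableSet_le (hτ.comp measurable_fst)
      (ENNReal.measurable_ofReal.comp measurable_snd)
  have hGmeas : Measurable (fun p : Ω × ℝ => α * Real.exp (-α * p.2)) :=
    measurable_const.mul (Real.measurable_exp.comp (measurable_snd.const_mul (-α)))
  have huncurry : Function.uncurry f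
      = Set.indicator S (fun p : Ω × ℝ => α * Real.exp (-α * p.2)) := by
    funext p
    simp only [Function.uncurry, hf, Set.indicator, mem_setOf_eq, hSdef]
  have hmeas : Measurable (Function.uncurry f) := by
    rw [huncurry]; exact hGmeas.indicator hS
  have hGint : Integrable (fun p : Ω × ℝ => α * Real.exp (-α * p.2)) (μ.prod ν) := by
    have h1 : Integrable (fun u : ℝ => α * Real.exp (-α * u)) ν :=
      (exp_neg_integrableOn_Ioi 0 hα).const_mul α
    have hmap : (μ.prod ν).map Prod.snd = ν := by
      rw [Measure.map_snd_prod, measure_univ, one_smul]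
    have := (integrable_map_measure (f := Prod.snd (α := Ω) (β := ℝ))
      (by rw [hmap]; exact h1.aestronglyMeasurable)
      measurable_snd.aemeasurable).mp (by rw [hmap]; exact h1)
    exact this
  have hint : Integrable (Function.uncurry f) (μ.prod ν) := by
    apply hGint.mono' hmeas.aestronglyMeasurable
    refine Filter.Eventually.of_forall fun p => ?_
    rw [huncurry, Real.norm_eq_abs]
    rcases Set.indicator_eq_zero_or_self S (fun p : Ω × ℝ => α * Real.exp (-α * p.2)) p
      with h | h
    · rw [h, abs_zero]; positivity
    · rw [h, abs_of_nonneg (by positivity)]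
  have hswap := integral_integral_swap hint
  have hLHS : ∀ ω, ∫ t, f ω t ∂ν = expf τ α ω := by
    intro ω
    by_cases hω : τ ω = ∞
    · have hempty : {u : ℝ | τ ω ≤ ENNReal.ofReal u} = ∅ := by
        ext u
        simp [hω, top_le_iff, ENNReal.ofReal_ne_top]
      simp [hf, hempty, expf, hω]
    · set s := (τ ω).toReal with hs
      have hs0 : 0 ≤ s := ENNReal.toReal_nonneg
      have hτω : τ ω = ENNReal.ofReal s := (ENNReal.ofReal_toReal hω).symm
      have hA : MeasurableSet {u : ℝ | τ ω ≤ ENNReal.ofReal u} :=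
        measurableSet_le measurable_const ENNReal.measurable_ofReal
      have hAeq : ({u : ℝ | τ ω ≤ ENNReal.ofReal u} ∩ Ioi 0 : Set ℝ)
          =ᵐ[volume] (Ioi s : Set ℝ) := by
        rw [MeasureTheory.ae_eq_set]
        constructor
        · refine measure_mono_null (fun u hu => ?_) (Real.volume_singleton (a := s))
          rcases hu with ⟨⟨hu1, hu2⟩, hu3⟩
          simp only [mem_setOf_eq, hτω] at hu1
          rw [ENNReal.ofReal_le_ofReal_iff (le_of_lt hu2)] at hu1
          simp only [mem_Ioi, not_lt] at hu3
          simp only [mem_singleton_iff]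
          linarith
        · refine measure_mono_null (t := (∅ : Set ℝ)) (fun u hu => ?_) (by simp)
          rcases hu with ⟨hu1, hu2⟩
          exfalso
          apply hu2
          constructor
          · simp only [mem_setOf_eq, hτω]
            exact ENNReal.ofReal_le_ofReal (le_of_lt hu1)
          · exact lt_of_le_of_lt hs0 hu1
      calc ∫ t, f ω t ∂ν
          = ∫ t in {u : ℝ | τ ω ≤ ENNReal.ofReal u} ∩ Ioi 0,
              α * Real.exp (-α * t) := by
            rw [hν, hf, integral_indicator hA, Measure.restrict_restrict hA]
        _ = ∫ t in Ioi s, α * Real.exp (-α * t) := setIntegral_congr_set hAeq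
        _ = Real.exp (-α * s) := integral_exp_Ioi hα s
        _ = expf τ α ω := by rw [expf, if_neg hω]
  have hRHS : ∀ t : ℝ, ∫ ω, f ω t ∂μ
      = (μ {ω | τ ω ≤ ENNReal.ofReal t}).toReal * (α * Real.exp (-α * t)) := by
    intro t
    have hBt : MeasurableSet {ω | τ ω ≤ ENNReal.ofReal t} :=
      measurableSet_le hτ measurable_const
    have heq : (fun ω => f ω t)
        = Set.indicator {ω | τ ω ≤ ENNReal.ofReal t}
            (fun _ => α * Real.exp (-α * t)) := by
      funext ω
      simp only [hf, Set.indicator, mem_setOf_eq]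
    rw [heq, integral_indicator_const _ hBt, smul_eq_mul, measureReal_def]
  calc ∫ ω, expf τ α ω ∂μ = ∫ ω, ∫ t, f ω t ∂ν ∂μ := by
        congr 1; funext ω; rw [hLHS ω]
    _ = ∫ t, ∫ ω, f ω t ∂μ ∂ν := hswap
    _ = ∫ t in Ioi (0:ℝ),
          (μ {ω | τ ω ≤ ENNReal.ofReal t}).toReal * (α * Real.exp (-α * t)) := by
        rw [hν]; congr 1; funext t; rw [hRHS t]

end Stmt9Aux

open Stmt9Aux

/-- Let `(τ_y)_{y ≥ x}` be nonnegative (possibly infinite) random variables with the uniform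
bound `|y| P(τ_y ≤ t) ≤ C`.  Then `lim_{y→∞} y P(τ_y ≤ t) = 0` for all `t > 0` iff
`lim_{y→∞} y E[e^{−ατ_y}] = 0` for all `α > 0` (with `e^{−ατ_y} := 0` on `{τ_y = ∞}`). -/
theorem stmt_9 {Ω : Type*} [MeasurableSpace Ω] (μ : Measure Ω) [IsProbabilityMeasure μ]
    (x C : ℝ) (τ : ℝ → Ω → ℝ≥0∞)
    (hτ : ∀ y, Measurable (τ y))
    (hC : ∀ y t : ℝ, 0 < t →
      |y| * (μ {ω | τ y ω ≤ ENNReal.ofReal t}).toReal ≤ C) :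
    (∀ t : ℝ, 0 < t →
        Tendsto (fun y => y * (μ {ω | τ y ω ≤ ENNReal.ofReal t}).toReal) atTop (nhds 0))
      ↔
    (∀ α : ℝ, 0 < α →
        Tendsto (fun y =>
            y * ∫ ω, (if τ y ω = ∞ then 0 else Real.exp (-α * (τ y ω).toReal)) ∂μ)
          atTop (nhds 0)) := by
  constructor
  · -- forward direction: dominated convergence
    intro hP α hα
    have hid : ∀ y : ℝ,
        y * ∫ ω, (if τ y ω = ∞ then 0 else Real.exp (-α * (τ y ω).toReal)) ∂μ
          = ∫ t in Ioi (0:ℝ),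
              y * ((μ {ω | τ y ω ≤ ENNReal.ofReal t}).toReal
                * (α * Real.exp (-α * t))) := by
      intro y
      have h1 : (∫ ω, (if τ y ω = ∞ then 0 else Real.exp (-α * (τ y ω).toReal)) ∂μ)
          = ∫ ω, expf (τ y) α ω ∂μ := by
        simp only [expf]
      rw [h1, identity μ (τ y) (hτ y) hα, ← integral_const_mul]
    have key : Tendsto (fun y : ℝ =>
        ∫ t in Ioi (0:ℝ),
          y * ((μ {ω | τ y ω ≤ ENNReal.ofReal t}).toReal
            * (α * Real.exp (-α * t)))) atTop (nhds 0) := by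
      have h1 : ∀ᶠ y : ℝ in atTop, AEStronglyMeasurable
          (fun t : ℝ => y * ((μ {ω | τ y ω ≤ ENNReal.ofReal t}).toReal
            * (α * Real.exp (-α * t)))) (volume.restrict (Ioi (0:ℝ))) := by
        refine Filter.Eventually.of_forall fun y => ?_
        have hmono : Monotone
            (fun t : ℝ => (μ {ω | τ y ω ≤ ENNReal.ofReal t}).toReal) := by
          intro a b hab
          exact ENNReal.toReal_mono (measure_ne_top μ _)
            (measure_mono fun ω hω => le_trans hω (ENNReal.ofReal_le_ofReal hab))
        exact (measurable_const.mul (hmono.measurable.mul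
          (measurable_const.mul
            (Real.measurable_exp.comp (measurable_id.const_mul (-α)))))).aestronglyMeasurable
      have h2 : ∀ᶠ y : ℝ in atTop, ∀ᵐ t ∂(volume.restrict (Ioi (0:ℝ))),
          ‖y * ((μ {ω | τ y ω ≤ ENNReal.ofReal t}).toReal
            * (α * Real.exp (-α * t)))‖ ≤ C * (α * Real.exp (-α * t)) := by
        refine Filter.Eventually.of_forall fun y => ?_
        rw [ae_restrict_iff' measurableSet_Ioi]
        refine Filter.Eventually.of_forall fun t ht => ?_
        have hc : (0:ℝ) ≤ α * Real.exp (-α * t) := by positivity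
        have hP0 : (0:ℝ) ≤ (μ {ω | τ y ω ≤ ENNReal.ofReal t}).toReal :=
          ENNReal.toReal_nonneg
        calc ‖y * ((μ {ω | τ y ω ≤ ENNReal.ofReal t}).toReal
                * (α * Real.exp (-α * t)))‖
            = (|y| * (μ {ω | τ y ω ≤ ENNReal.ofReal t}).toReal)
                * (α * Real.exp (-α * t)) := by
              rw [Real.norm_eq_abs, abs_mul, abs_of_nonneg (mul_nonneg hP0 hc),
                ← mul_assoc]
          _ ≤ C * (α * Real.exp (-α * t)) :=
              mul_le_mul_of_nonneg_right (hC y t ht) hc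
      have h3 : Integrable (fun t : ℝ => C * (α * Real.exp (-α * t)))
          (volume.restrict (Ioi (0:ℝ))) :=
        ((exp_neg_integrableOn_Ioi 0 hα).const_mul α).const_mul C
      have h4 : ∀ᵐ t ∂(volume.restrict (Ioi (0:ℝ))),
          Tendsto (fun y : ℝ => y * ((μ {ω | τ y ω ≤ ENNReal.ofReal t}).toReal
            * (α * Real.exp (-α * t)))) atTop (nhds ((fun _ : ℝ => (0:ℝ)) t)) := by
        rw [ae_restrict_iff' measurableSet_Ioi]
        refine Filter.Eventually.of_forall fun t ht => ?_
        have h := (hP t ht).mul_const (α * Real.exp (-α * t))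
        rw [zero_mul] at h
        exact h.congr fun y => by ring
      have hDCT := tendsto_integral_filter_of_dominated_convergence
        (fun t : ℝ => C * (α * Real.exp (-α * t))) h1 h2 h3 h4
      simpa using hDCT
    exact (Filter.tendsto_congr fun y => (hid y).symm).mp key
  · -- converse: Markov inequality
    intro hE t ht
    have hE1 := hE 1 one_pos
    apply squeeze_zero' (g := fun y =>
      Real.exp (1 * t) * (y * ∫ ω, (if τ y ω = ∞ then 0
        else Real.exp (-1 * (τ y ω).toReal)) ∂μ))
    · filter_upwards [eventually_ge_atTop (0:ℝ)] with y hy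
      exact mul_nonneg hy ENNReal.toReal_nonneg
    · filter_upwards [eventually_ge_atTop (0:ℝ)] with y hy
      have hmk := markov μ (τ y) (hτ y) one_pos ht
      have hintf : (∫ ω, expf (τ y) 1 ω ∂μ)
          = ∫ ω, (if τ y ω = ∞ then 0 else Real.exp (-1 * (τ y ω).toReal)) ∂μ := by
        simp only [expf]
      rw [hintf] at hmk
      calc y * (μ {ω | τ y ω ≤ ENNReal.ofReal t}).toReal
          ≤ y * (Real.exp (1 * t) * ∫ ω, (if τ y ω = ∞ then 0
              else Real.exp (-1 * (τ y ω).toReal)) ∂μ) :=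
            mul_le_mul_of_nonneg_left hmk hy
        _ = Real.exp (1 * t) * (y * ∫ ω, (if τ y ω = ∞ then 0
              else Real.exp (-1 * (τ y ω).toReal)) ∂μ) := by ring
    · have := hE1.const_mul (Real.exp (1 * t))
      rw [mul_zero] at this
      exact this
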